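/- If J \ I is a connected nonempty subset of a finite poset P with I ⊂ J poset ideals, then J \ I = {x ∈ P : x ≤ b for some b ∈ max(J \ I)} ∩ {x ∈ P : a ≤ x for some a ∈ min(J \ I)}; consequently J \ I is determined by max(J \ I) and min(J \ I) among such differences, i.e., if additionally J \ I' is connected with max(J \ I) = max(J \ I') and min(J \ I) = min(J \ I') then I = I'. -/

import Mathlib

/-- Indicator vector of a subset `W` of `P` in `ℝ^P`. -/
noncomputable def rho {P : Type*} (W : Set P) : P → ℝ := W.indicator fun _ => 1

/-- The order polytope of a finite poset `P`. -/
def orderPolytope (P : Type*) [Fintype P] [PartialOrder P] : Set (P → ℝ) :=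
  {f | (∀ i, 0 ≤ f i ∧ f i ≤ 1) ∧ ∀ i j : P, i ≤ j → f j ≤ f i}

/-- The chain polytope of a finite poset `P`. -/
def chainPolytope (P : Type*) [Fintype P] [PartialOrder P] : Set (P → ℝ) :=
  {f | (∀ i, 0 ≤ f i) ∧ ∀ C : Finset P, IsMaxChain (· ≤ ·) (C : Set P) → ∑ i ∈ C, f i ≤ 1}

/-- A subset `S` of a poset `P` is connected in `P` if any two of its elements are
joined by a sequence within `S` whose consecutive members are comparable in `P`. -/
def ConnIn {P : Type*} [PartialOrder P] (S : Set P) : Prop :=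
  ∀ x ∈ S, ∀ y ∈ S,
    Relation.ReflTransGen (fun u v => u ∈ S ∧ v ∈ S ∧ (u ≤ v ∨ v ≤ u)) x y

/-- The segment joining `u` and `v` is an edge (one-dimensional face) of `S`. -/
def IsEdgeOf {E : Type*} [AddCommGroup E] [Module ℝ E] (S : Set E) (u v : E) : Prop :=
  u ≠ v ∧ IsExtreme ℝ S (segment ℝ u v)

/-- The set of maximal elements of a subset of a poset. -/
def maxSet {P : Type*} [PartialOrder P] (S : Set P) : Set P :=
  {x | x ∈ S ∧ ∀ y ∈ S, x ≤ y → x = y}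

/-- The set of minimal elements of a subset of a poset. -/
def minSet {P : Type*} [PartialOrder P] (S : Set P) : Set P :=
  {x | x ∈ S ∧ ∀ y ∈ S, y ≤ x → x = y}

/-- The 1-skeleton of the order polytope, combinatorially: vertices are poset
ideals, adjacency is proper inclusion with connected difference. -/
def orderSkeleton (P : Type*) [PartialOrder P] :
    SimpleGraph {I : Set P // IsLowerSet I} :=
  SimpleGraph.fromRel fun I J => I.1 ⊂ J.1 ∧ ConnIn (J.1 \ I.1)

/-- The 1-skeleton of the chain polytope, combinatorially: vertices are antichains,
adjacency is connectedness of the symmetric difference. -/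
def chainSkeleton (P : Type*) [PartialOrder P] :
    SimpleGraph {A : Set P // IsAntichain (· ≤ ·) A} :=
  SimpleGraph.fromRel fun A B => ConnIn ((A.1 \ B.1) ∪ (B.1 \ A.1))

/-- The multiset of vertex degrees of a graph (the degree sequence, up to order). -/
noncomputable def degMultiset {V : Type*} [Fintype V] (G : SimpleGraph V) : Multiset ℕ :=
  Finset.univ.val.map fun v => (G.neighborSet v).ncard

/-- `P` contains the poset `X = {a,b,c,g,h}` with `a<c, b<c, c<g, c<h` as a subposet. -/
def ContainsX (P : Type*) [PartialOrder P] : Prop :=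
  ∃ a b c g h : P, a < c ∧ b < c ∧ c < g ∧ c < h ∧
    ¬ a ≤ b ∧ ¬ b ≤ a ∧ ¬ g ≤ h ∧ ¬ h ≤ g

/-- The pair `(I, J)` of poset ideals with `I ⊂ J` and `J \ I` connected in `P`. -/
def OmegaP {P : Type*} [PartialOrder P] (I J : Set P) : Prop :=
  IsLowerSet I ∧ IsLowerSet J ∧ I ⊂ J ∧ ConnIn (J \ I)

/-- The pair `(A, B)` of distinct antichains with connected symmetric difference. -/
def PsiP {P : Type*} [PartialOrder P] (A B : Set P) : Prop :=
  IsAntichain (· ≤ ·) A ∧ IsAntichain (· ≤ ·) B ∧ A ≠ B ∧ ConnIn ((A \ B) ∪ (B \ A))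

/-- First component of the map `Ω → Ψ`: `A = max J`. -/
def FmapA {P : Type*} [PartialOrder P] (_I J : Set P) : Set P := maxSet J

/-- Second component of the map `Ω → Ψ`:
`B = min(J \ I) ∪ (max I ∩ max J)`, with `min(J \ I) := ∅` when `|J \ I| = 1`. -/
def FmapB {P : Type*} [PartialOrder P] (I J : Set P) : Set P :=
  (if (J \ I).ncard = 1 then ∅ else minSet (J \ I)) ∪ (maxSet I ∩ maxSet J)

noncomputable instance {P : Type*} [Fintype P] [PartialOrder P] :
    Fintype {I : Set P // IsLowerSet I} := Fintype.ofFinite _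

noncomputable instance {P : Type*} [Fintype P] [PartialOrder P] :
    Fintype {A : Set P // IsAntichain (· ≤ ·) A} := Fintype.ofFinite _

theorem stmt11 {P : Type*} [Fintype P] [PartialOrder P] (I I' J : Set P)
    (hI : IsLowerSet I) (hI' : IsLowerSet I') (hJ : IsLowerSet J)
    (hIJ : I ⊂ J) (hI'J : I' ⊂ J) (hc : ConnIn (J \ I)) :
    (J \ I = {x | ∃ b ∈ maxSet (J \ I), x ≤ b} ∩ {x | ∃ a ∈ minSet (J \ I), a ≤ x}) ∧
    (ConnIn (J \ I') → maxSet (J \ I) = maxSet (J \ I') →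
      minSet (J \ I) = minSet (J \ I') → I = I') := by
  have key : ∀ K : Set P, IsLowerSet K →
      J \ K = {x | ∃ b ∈ maxSet (J \ K), x ≤ b} ∩ {x | ∃ a ∈ minSet (J \ K), a ≤ x} := by
    intro K hK
    ext x
    constructor
    · intro hx
      constructor
      · obtain ⟨b, hb, hbmax⟩ := Set.Finite.exists_maximalFor id {y ∈ J \ K | x ≤ y}
          (Set.toFinite _) ⟨x, hx, le_refl x⟩
        exact ⟨b, ⟨hb.1, fun y hy hby => le_antisymm hby (hbmax ⟨hy, hb.2.trans hby⟩ hby)⟩, hb.2⟩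
      · obtain ⟨a, ha, hamin⟩ := Set.Finite.exists_minimalFor id {y ∈ J \ K | y ≤ x}
          (Set.toFinite _) ⟨x, hx, le_refl x⟩
        exact ⟨a, ⟨ha.1, fun y hy hya => le_antisymm (hamin ⟨hy, hya.trans ha.2⟩ hya) hya⟩, ha.2⟩
    · rintro ⟨⟨b, hb, hxb⟩, ⟨a, ha, hax⟩⟩
      exact ⟨hJ hxb hb.1.1, fun hxK => ha.1.2 (hK hax hxK)⟩
  refine ⟨key I hI, fun hc' hmax hmin => ?_⟩
  have h1 := key I hI
  have h2 := key I' hI'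
  rw [hmax, hmin] at h1
  have hd : J \ I = J \ I' := h1.trans h2.symm
  calc I = J \ (J \ I) := (Set.diff_diff_cancel_left hIJ.subset).symm
    _ = J \ (J \ I') := by rw [hd]
    _ = I' := Set.diff_diff_cancel_left hI'J.subset
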